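/- Let m > 1, i_0 ∈ {1,...,n}, 𝐢₀ = (i_1,...,i_m) distinct indices not containing i_0, and let L ⊂ ℂ^{mn} be the linear subspace defined by z_{i_1,2} = z_{i_2,2} = ... = z_{i_m,2}. For a multiindex 𝐢 of m+1 distinct indices avoiding i_0, the restriction of the determinant polynomial d_𝐢 to L is reducible if and only if 𝐢 contains all of i_1,...,i_m; and in that case d_𝐢|_L = ± D·(z_{i,2} − z_{i_1,2}) where i is the unique element of 𝐢 not among i_1,...,i_m and D is a minor polynomial. Moreover deg(d_𝐢|_L) = m for all such 𝐢. -/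

import Mathlib

open MvPolynomial

/-- The `(m+1)×(m+1)` matrix of variables with rows `(z_{i_r,1},...,z_{i_r,m},1)`
for a multiindex `i` of `m + 1 = K + 3` indices (the paper's `m` is `K + 2 > 1`). -/
noncomputable def rowMatrix {n K : ℕ} (i : Fin (K + 3) → Fin n) :
    Matrix (Fin (K + 3)) (Fin (K + 3)) (MvPolynomial (Fin n × Fin (K + 2)) ℂ) :=
  Matrix.of fun r c =>
    (Fin.snoc (fun j : Fin (K + 2) => X (i r, j)) 1 :
      Fin (K + 3) → MvPolynomial (Fin n × Fin (K + 2)) ℂ) c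

/-- Restriction to the linear subspace `L ⊂ ℂ^{mn}` defined by
`z_{i_1,2} = ⋯ = z_{i_m,2}`: each variable `z_{i_t,2}` is renamed to `z_{i_1,2}`
(columns 0-indexed, so the second column is column `1`). -/
noncomputable def restrictL {n K : ℕ} (i₀ : Fin (K + 2) → Fin n) :
    MvPolynomial (Fin n × Fin (K + 2)) ℂ →ₐ[ℂ] MvPolynomial (Fin n × Fin (K + 2)) ℂ :=
  rename fun p =>
    if (∃ t, i₀ t = p.1) ∧ p.2 = (⟨1, by omega⟩ : Fin (K + 2)) then (i₀ 0, p.2) else p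

/-- The minor of `rowMatrix i` complementary to the entry `z_{ii r₀, 2}`
(delete row `r₀` and the second column). -/
noncomputable def complMinor {n K : ℕ} (i : Fin (K + 3) → Fin n) (r₀ : Fin (K + 3)) :
    MvPolynomial (Fin n × Fin (K + 2)) ℂ :=
  (Matrix.of fun r c : Fin (K + 2) =>
    rowMatrix i (r₀.succAbove r) ((⟨1, by omega⟩ : Fin (K + 3)).succAbove c)).det




namespace ProofAux

variable {σ : Type} [DecidableEq σ]

noncomputable def affM (s : ℕ) (v : Fin (s + 2) → Fin (s + 1) → σ) :
    Matrix (Fin (s + 2)) (Fin (s + 2)) (MvPolynomial σ ℂ) :=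
  Matrix.of fun r c =>
    (Fin.snoc (fun j : Fin (s + 1) => X (v r j)) 1 :
      Fin (s + 2) → MvPolynomial σ ℂ) c

noncomputable def affD (s : ℕ) (v : Fin (s + 2) → Fin (s + 1) → σ) : MvPolynomial σ ℂ :=
  (affM s v).det

lemma affM_castSucc {s : ℕ} (v : Fin (s + 2) → Fin (s + 1) → σ) (r : Fin (s + 2))
    (j : Fin (s + 1)) : affM s v r (Fin.castSucc j) = X (v r j) := by
  simp [affM, Fin.snoc_castSucc]

lemma affM_last {s : ℕ} (v : Fin (s + 2) → Fin (s + 1) → σ) (r : Fin (s + 2)) :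
    affM s v r (Fin.last (s + 1)) = 1 := by
  simp [affM]

lemma affM_submatrix {s : ℕ} (v : Fin (s + 3) → Fin (s + 2) → σ) (r₀ : Fin (s + 3))
    (c : Fin (s + 2)) :
    (affM (s + 1) v).submatrix r₀.succAbove (Fin.castSucc c).succAbove
      = affM s (fun a b => v (r₀.succAbove a) (c.succAbove b)) := by
  ext a b
  refine Fin.lastCases ?_ (fun b => ?_) b
  · have h : (Fin.castSucc c).succAbove (Fin.last (s + 1)) = Fin.last (s + 2) := by
      rw [Fin.succAbove_castSucc_of_le c (Fin.last (s + 1)) (Fin.le_last c), Fin.succ_last]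
    simp [Matrix.submatrix_apply, h, affM_last]
  · have h : (Fin.castSucc c).succAbove (Fin.castSucc b) = Fin.castSucc (c.succAbove b) :=
      Fin.castSucc_succAbove_castSucc
    simp [Matrix.submatrix_apply, h, affM_castSucc]

lemma affD_expand {s : ℕ} (v : Fin (s + 3) → Fin (s + 2) → σ) (c : Fin (s + 2)) :
    affD (s + 1) v = ∑ r : Fin (s + 3),
      (-1 : MvPolynomial σ ℂ) ^ ((r : ℕ) + ((Fin.castSucc c : Fin (s + 3)) : ℕ)) * X (v r c)
        * affD s (fun a b => v (r.succAbove a) (c.succAbove b)) := by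
  rw [affD, Matrix.det_succ_column (affM (s + 1) v) (Fin.castSucc c)]
  refine Finset.sum_congr rfl fun r _ => ?_
  rw [affM_castSucc, affM_submatrix, affD]

lemma sum_minor_zero {s : ℕ} (v : Fin (s + 3) → Fin (s + 2) → σ) (c : Fin (s + 2)) :
    ∑ r : Fin (s + 3),
      (-1 : MvPolynomial σ ℂ) ^ ((r : ℕ) + ((Fin.castSucc c : Fin (s + 3)) : ℕ))
        * affD s (fun a b => v (r.succAbove a) (c.succAbove b)) = 0 := by
  set N := (affM (s + 1) v).updateCol (Fin.castSucc c) (fun _ => 1) with hN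
  have hcl : (Fin.castSucc c : Fin (s + 3)) ≠ Fin.last (s + 2) := Fin.castSucc_lt_last c |>.ne
  have hdet : N.det = 0 := by
    apply Matrix.det_zero_of_column_eq hcl
    intro k
    rw [hN, Matrix.updateCol_self, Matrix.updateCol_ne hcl.symm, affM_last]
  have hexp := Matrix.det_succ_column N (Fin.castSucc c)
  rw [hdet] at hexp
  rw [hexp]
  refine Finset.sum_congr rfl fun r _ => ?_
  have h1 : N r (Fin.castSucc c) = 1 := Matrix.updateCol_self
  have h2 : N.submatrix r.succAbove (Fin.castSucc c).succAbove
      = (affM (s + 1) v).submatrix r.succAbove (Fin.castSucc c).succAbove :=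
    Matrix.submatrix_updateCol_succAbove _ _ _ _
  rw [h1, h2, affM_submatrix, mul_one, affD]


lemma prod_X_eq_monomial {ι : Type*} (t : Finset ι) (f : ι → σ) :
    (∏ j ∈ t, (X (f j) : MvPolynomial σ ℂ))
      = monomial (∑ j ∈ t, Finsupp.single (f j) 1) 1 := by
  classical
  induction t using Finset.induction_on with
  | empty => simp [monomial_zero']
  | insert _ _ h ih =>
      rw [Finset.prod_insert h, Finset.sum_insert h, ih, X, monomial_mul, one_mul]

lemma vars_affD_subset {s : ℕ} (v : Fin (s + 2) → Fin (s + 1) → σ) :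
    ↑(affD s v).vars ⊆ Set.range (fun p : Fin (s + 2) × Fin (s + 1) => v p.1 p.2) := by
  rw [← mem_supported]
  rw [affD, Matrix.det_apply']
  apply Subalgebra.sum_mem
  intro τ _
  apply Subalgebra.mul_mem
  · exact Subalgebra.intCast_mem _ _
  · apply Subalgebra.prod_mem
    intro i _
    refine Fin.lastCases ?_ (fun j => ?_) i
    · rw [affM_last]; exact Subalgebra.one_mem _
    · rw [affM_castSucc]
      exact X_mem_supported.mpr ⟨(τ (Fin.castSucc j), j), rfl⟩


lemma affD_coeff {s : ℕ} (v : Fin (s + 2) → Fin (s + 1) → σ)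
    (Hcol : ∀ r j r' j', v r j = v r' j' → j = j')
    (j₀ : Fin (s + 1)) (Hinj : ∀ j, j ≠ j₀ → ∀ r r', v r j = v r' j → r = r')
    (r₁ : Fin (s + 2)) (hr₁ : ∀ r, v r j₀ = v r₁ j₀ → r = r₁) :
    ∃ M : σ →₀ ℕ, (coeff M (affD s v) = 1 ∨ coeff M (affD s v) = -1)
      ∧ (M.sum fun _ k => k) = s + 1 ∧ M (v r₁ j₀) ≠ 0 := by
  classical
  set σ₀ : Equiv.Perm (Fin (s + 2)) := Equiv.swap (Fin.castSucc j₀) r₁ with hσ₀def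
  have hσ₀ : σ₀ (Fin.castSucc j₀) = r₁ := Equiv.swap_apply_left _ _
  set mm : Equiv.Perm (Fin (s + 2)) → (σ →₀ ℕ) :=
    fun τ => ∑ j : Fin (s + 1), Finsupp.single (v (τ (Fin.castSucc j)) j) 1 with hmm
  set M := mm σ₀ with hM
  have happly : ∀ τ t, (mm τ) t
      = ∑ j : Fin (s + 1), (if v (τ (Fin.castSucc j)) j = t then 1 else 0) := by
    intro τ t
    rw [hmm]
    rw [show ((∑ j : Fin (s + 1), Finsupp.single (v (τ (Fin.castSucc j)) j) 1) t)
        = Finsupp.applyAddHom t (∑ j : Fin (s + 1), Finsupp.single (v (τ (Fin.castSucc j)) j) 1)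
      from rfl, map_sum]
    exact Finset.sum_congr rfl fun j _ => Finsupp.single_apply
  have hval : ∀ τ j, (mm τ) (v (τ (Fin.castSucc j)) j) ≠ 0 := by
    intro τ j
    rw [happly]
    intro hzero
    have hle : (1 : ℕ) ≤ ∑ j' : Fin (s + 1),
        (if v (τ (Fin.castSucc j')) j' = v (τ (Fin.castSucc j)) j then 1 else 0) := by
      have := Finset.single_le_sum
        (f := fun j' : Fin (s + 1) =>
          (if v (τ (Fin.castSucc j')) j' = v (τ (Fin.castSucc j)) j then (1 : ℕ) else 0))
        (fun i _ => Nat.zero_le _) (Finset.mem_univ j)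
      simpa using this
    omega
  have hMsupp : ∀ t, M t ≠ 0 → ∃ j, v (σ₀ (Fin.castSucc j)) j = t := by
    intro t ht
    rw [hM, happly] at ht
    by_contra hc
    push_neg at hc
    refine ht (Finset.sum_eq_zero fun j _ => ?_)
    rw [if_neg (hc j)]
  -- uniqueness of permutations realizing M
  have huniq : ∀ τ : Equiv.Perm (Fin (s + 2)), mm τ = M → τ = σ₀ := by
    intro τ heq
    have hagree : ∀ j : Fin (s + 1), τ (Fin.castSucc j) = σ₀ (Fin.castSucc j) := by
      intro j
      have h2 : M (v (τ (Fin.castSucc j)) j) ≠ 0 := by rw [← heq]; exact hval τ j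
      obtain ⟨j', hj'⟩ := hMsupp _ h2
      have hjj : j' = j := Hcol _ _ _ _ hj'
      subst hjj
      by_cases hj0 : j' = j₀
      · subst hj0
        have : v (τ (Fin.castSucc j')) j' = v r₁ j' := by rw [← hj', hσ₀]
        rw [hσ₀]
        exact hr₁ _ this
      · exact (Hinj j' hj0 _ _ hj').symm
    have hlast : τ (Fin.last (s + 1)) = σ₀ (Fin.last (s + 1)) := by
      rcases Fin.eq_castSucc_or_eq_last (σ₀.symm (τ (Fin.last (s + 1)))) with ⟨j, hj⟩ | hj
      · exfalso
        have : σ₀ (Fin.castSucc j) = τ (Fin.last (s + 1)) := by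
          rw [← hj]; simp
        rw [← hagree j] at this
        have := τ.injective this
        exact (Fin.castSucc_lt_last j).ne this
      · have := congrArg σ₀ hj
        simpa using this
    refine Equiv.ext fun i => ?_
    rcases Fin.eq_castSucc_or_eq_last i with ⟨j, rfl⟩ | rfl
    · exact hagree j
    · exact hlast
  have hprod : ∀ τ : Equiv.Perm (Fin (s + 2)),
      (∏ i, affM s v (τ i) i) = monomial (mm τ) 1 := by
    intro τ
    rw [Fin.prod_univ_castSucc]
    simp only [affM_castSucc, affM_last, mul_one]
    rw [prod_X_eq_monomial]
  have hcoeff : coeff M (affD s v) = ((Equiv.Perm.sign σ₀ : ℤ) : ℂ) := by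
    rw [affD, Matrix.det_apply']
    rw [MvPolynomial.coeff_sum]
    rw [Finset.sum_eq_single σ₀]
    · rw [hprod, ← map_intCast (C : ℂ →+* MvPolynomial σ ℂ), coeff_C_mul, coeff_monomial,
        if_pos rfl, mul_one]
    · intro τ _ hτ
      rw [hprod, ← map_intCast (C : ℂ →+* MvPolynomial σ ℂ), coeff_C_mul, coeff_monomial,
        if_neg (fun h => hτ (huniq τ h)), mul_zero]
    · intro h
      exact absurd (Finset.mem_univ σ₀) h
  refine ⟨M, ?_, ?_, ?_⟩
  · rcases Int.units_eq_one_or (Equiv.Perm.sign σ₀) with h | h <;>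
      rw [hcoeff, h] <;> simp
  · have : Multiset.card (Finsupp.toMultiset M) = s + 1 := by
      rw [hM, hmm, map_sum]
      simp only [Finsupp.toMultiset_single, one_smul]
      simp
    rw [← this, Finsupp.card_toMultiset]
    rfl
  · have := hval σ₀ j₀
    rw [hσ₀] at this
    exact this


lemma totalDegree_affD_le {s : ℕ} (v : Fin (s + 2) → Fin (s + 1) → σ) :
    (affD s v).totalDegree ≤ s + 1 := by
  classical
  rw [affD, Matrix.det_apply']
  refine MvPolynomial.totalDegree_finsetSum_le fun τ _ => ?_
  calc (((Equiv.Perm.sign τ : ℤ) : MvPolynomial σ ℂ) * ∏ i, affM s v (τ i) i).totalDegree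
      ≤ ((Equiv.Perm.sign τ : ℤ) : MvPolynomial σ ℂ).totalDegree
        + (∏ i, affM s v (τ i) i).totalDegree := totalDegree_mul _ _
    _ ≤ s + 1 := by
        rw [← map_intCast (C : ℂ →+* MvPolynomial σ ℂ), totalDegree_C, zero_add]
        rw [Fin.prod_univ_castSucc]
        simp only [affM_castSucc, affM_last, mul_one]
        refine le_trans (totalDegree_finset_prod _ _) ?_
        refine le_trans (Finset.sum_le_card_nsmul _ _ 1 fun j _ => le_of_eq (totalDegree_X _)) ?_
        simp

lemma affD_ne_zero {s : ℕ} (v : Fin (s + 2) → Fin (s + 1) → σ)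
    (Hcol : ∀ r j r' j', v r j = v r' j' → j = j')
    (j₀ : Fin (s + 1)) (Hinj : ∀ j, j ≠ j₀ → ∀ r r', v r j = v r' j → r = r')
    (r₁ : Fin (s + 2)) (hr₁ : ∀ r, v r j₀ = v r₁ j₀ → r = r₁) :
    affD s v ≠ 0 := by
  obtain ⟨M, h1, -, -⟩ := affD_coeff v Hcol j₀ Hinj r₁ hr₁
  intro h
  rw [h] at h1
  rcases h1 with h1 | h1 <;> simp at h1

lemma totalDegree_affD {s : ℕ} (v : Fin (s + 2) → Fin (s + 1) → σ)
    (Hcol : ∀ r j r' j', v r j = v r' j' → j = j')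
    (j₀ : Fin (s + 1)) (Hinj : ∀ j, j ≠ j₀ → ∀ r r', v r j = v r' j → r = r')
    (r₁ : Fin (s + 2)) (hr₁ : ∀ r, v r j₀ = v r₁ j₀ → r = r₁) :
    (affD s v).totalDegree = s + 1 := by
  refine le_antisymm (totalDegree_affD_le v) ?_
  obtain ⟨M, h1, h2, -⟩ := affD_coeff v Hcol j₀ Hinj r₁ hr₁
  have hmem : M ∈ (affD s v).support := by
    rw [MvPolynomial.mem_support_iff]
    rcases h1 with h1 | h1 <;> rw [h1] <;> simp
  have := MvPolynomial.le_totalDegree hmem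
  omega

lemma mem_vars_affD {s : ℕ} (v : Fin (s + 2) → Fin (s + 1) → σ)
    (Hcol : ∀ r j r' j', v r j = v r' j' → j = j')
    (j₀ : Fin (s + 1)) (Hinj : ∀ j, j ≠ j₀ → ∀ r r', v r j = v r' j → r = r')
    (r₁ : Fin (s + 2)) (hr₁ : ∀ r, v r j₀ = v r₁ j₀ → r = r₁) :
    v r₁ j₀ ∈ (affD s v).vars := by
  obtain ⟨M, h1, -, h3⟩ := affD_coeff v Hcol j₀ Hinj r₁ hr₁
  rw [MvPolynomial.mem_vars]
  refine ⟨M, ?_, Finsupp.mem_support_iff.mpr h3⟩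
  rw [MvPolynomial.mem_support_iff]
  rcases h1 with h1 | h1 <;> rw [h1] <;> simp


noncomputable def Ee (x : σ) :
    MvPolynomial σ ℂ ≃ₐ[ℂ] Polynomial (MvPolynomial {t : σ // t ≠ x} ℂ) :=
  (renameEquiv ℂ (Equiv.optionSubtypeNe x).symm).trans
    (optionEquivLeft ℂ {t : σ // t ≠ x})

lemma Ee_X_self (x : σ) : Ee x (X x) = Polynomial.X := by
  rw [Ee, AlgEquiv.trans_apply, renameEquiv_apply, rename_X,
    Equiv.optionSubtypeNe_symm_self, optionEquivLeft_X_none]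

lemma Ee_rename (x : σ) (q : MvPolynomial {t : σ // t ≠ x} ℂ) :
    Ee x (rename (Subtype.val : {t : σ // t ≠ x} → σ) q) = Polynomial.C q := by
  have h : (Ee x).toAlgHom.comp (rename (Subtype.val : {t : σ // t ≠ x} → σ))
      = Polynomial.CAlgHom := by
    apply MvPolynomial.algHom_ext
    intro t
    simp only [AlgHom.coe_comp, Function.comp_apply, rename_X, AlgEquiv.toAlgHom_eq_coe,
      AlgHom.coe_coe]
    change Ee x (X (t : σ)) = Polynomial.CAlgHom (X t)
    rw [Ee, AlgEquiv.trans_apply, renameEquiv_apply, rename_X,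
      Equiv.optionSubtypeNe_symm_of_ne t.2, optionEquivLeft_X_some]
    rfl
  have := congrArg (fun f => f q) (congrArg (fun f => f.toFun) h)
  simpa using this

lemma exists_rep {x : σ} {p : MvPolynomial σ ℂ} (h : x ∉ p.vars) :
    ∃ q : MvPolynomial {t : σ // t ≠ x} ℂ, rename Subtype.val q = p := by
  apply exists_rename_eq_of_vars_subset_range p (Subtype.val : {t : σ // t ≠ x} → σ)
    Subtype.val_injective
  intro t ht
  exact ⟨⟨t, fun he => h (he ▸ ht)⟩, rfl⟩

lemma not_mem_vars_of_natDegree_eq_zero {x : σ} {p : MvPolynomial σ ℂ}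
    (h : (Ee x p).natDegree = 0) : x ∉ p.vars := by
  obtain ⟨q, hq⟩ := Polynomial.natDegree_eq_zero.mp h
  have hp : p = rename Subtype.val q := by
    apply (Ee x).injective
    rw [Ee_rename, hq]
  rw [hp]
  intro hmem
  obtain ⟨⟨t, ht⟩, -, h2⟩ := Finset.mem_image.mp (MvPolynomial.vars_rename _ _ hmem)
  exact ht h2

lemma not_isUnit_of_mem_vars {x : σ} {p : MvPolynomial σ ℂ} (h : x ∈ p.vars) :
    ¬ IsUnit p := by
  intro hu
  have : IsUnit (Ee x p) := hu.map (Ee x)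
  exact (not_mem_vars_of_natDegree_eq_zero
    (Polynomial.natDegree_eq_zero_of_isUnit this)) h

lemma dvd_of_dvd_linear {x : σ} {q A B : MvPolynomial σ ℂ} (hq : x ∉ q.vars)
    (hA : x ∉ A.vars) (hB : x ∉ B.vars) (h : q ∣ A * X x + B) : q ∣ A ∧ q ∣ B := by
  obtain ⟨q₀, rfl⟩ := exists_rep hq
  obtain ⟨A₀, rfl⟩ := exists_rep hA
  obtain ⟨B₀, rfl⟩ := exists_rep hB
  have hdvd : Polynomial.C q₀ ∣ Polynomial.C A₀ * Polynomial.X + Polynomial.C B₀ := by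
    have := map_dvd (Ee x).toAlgHom h
    change Ee x _ ∣ Ee x _ at this
    simpa only [AlgEquiv.toAlgHom_eq_coe, AlgHom.coe_coe, map_add, map_mul, Ee_rename,
      Ee_X_self] using this
  rw [Polynomial.C_dvd_iff_dvd_coeff] at hdvd
  have h1 : q₀ ∣ A₀ := by
    have := hdvd 1
    simpa using this
  have h0 : q₀ ∣ B₀ := by
    have := hdvd 0
    simpa using this
  exact ⟨map_dvd (rename Subtype.val).toRingHom h1, map_dvd (rename Subtype.val).toRingHom h0⟩

lemma irreducible_linear {x : σ} {A B : MvPolynomial σ ℂ} (hA : x ∉ A.vars)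
    (hB : x ∉ B.vars) (hA0 : A ≠ 0) (hcop : ∀ q, q ∣ A → q ∣ B → IsUnit q) :
    Irreducible (A * X x + B) := by
  obtain ⟨A₀, hA₀⟩ := exists_rep hA
  obtain ⟨B₀, hB₀⟩ := exists_rep hB
  have hA₀0 : A₀ ≠ 0 := by
    rintro rfl
    rw [map_zero] at hA₀
    exact hA0 hA₀.symm
  have hEp : Ee x (A * X x + B) = Polynomial.C A₀ * Polynomial.X + Polynomial.C B₀ := by
    rw [map_add, map_mul, Ee_X_self, ← hA₀, ← hB₀, Ee_rename, Ee_rename]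
  have hdeg : (Ee x (A * X x + B)).natDegree = 1 := by
    rw [hEp]
    exact Polynomial.natDegree_linear hA₀0
  constructor
  · intro hu
    have : IsUnit (Ee x (A * X x + B)) := hu.map (Ee x)
    rw [Polynomial.natDegree_eq_zero_of_isUnit this] at hdeg
    exact one_ne_zero hdeg.symm
  · intro a b hab
    have hane : a ≠ 0 := by
      rintro rfl
      rw [zero_mul] at hab
      rw [hab] at hdeg
      simp at hdeg
    have hbne : b ≠ 0 := by
      rintro rfl
      rw [mul_zero] at hab
      rw [hab] at hdeg
      simp at hdeg
    have hsum : (Ee x a).natDegree + (Ee x b).natDegree = 1 := by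
      rw [← Polynomial.natDegree_mul ((map_ne_zero_iff _ (Ee x).injective).mpr hane)
        ((map_ne_zero_iff _ (Ee x).injective).mpr hbne), ← map_mul, ← hab, hdeg]
    have key : ∀ c : MvPolynomial σ ℂ, c ∣ (A * X x + B) → (Ee x c).natDegree = 0 →
        IsUnit c := by
      intro c hcd hc0
      have hxc : x ∉ c.vars := not_mem_vars_of_natDegree_eq_zero hc0
      obtain ⟨h1, h2⟩ := dvd_of_dvd_linear hxc hA hB hcd
      exact hcop c h1 h2
    rcases Nat.eq_zero_or_pos (Ee x a).natDegree with h | h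
    · exact Or.inl (key a (Dvd.intro b hab.symm) h)
    · have hb0 : (Ee x b).natDegree = 0 := by omega
      exact Or.inr (key b (Dvd.intro_left a hab.symm) hb0)


lemma vars_sign_mul (e : ℕ) (p : MvPolynomial σ ℂ) :
    ((-1 : MvPolynomial σ ℂ) ^ e * p).vars = p.vars := by
  rcases neg_one_pow_eq_or (MvPolynomial σ ℂ) e with h | h <;> rw [h]
  · rw [one_mul]
  · rw [neg_one_mul, vars_neg]

lemma dvd_of_dvd_sign_mul {e : ℕ} {q p : MvPolynomial σ ℂ}
    (h : q ∣ (-1 : MvPolynomial σ ℂ) ^ e * p) : q ∣ p := by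
  rcases neg_one_pow_eq_or (MvPolynomial σ ℂ) e with he | he <;> rw [he] at h
  · rwa [one_mul] at h
  · rw [neg_one_mul] at h
    exact (dvd_neg).mp h

lemma affD_irreducible : ∀ (s : ℕ) (v : Fin (s + 2) → Fin (s + 1) → σ)
    (j₀ : Fin (s + 1)) (y : σ),
    (∀ r j r' j', v r j = v r' j' → j = j' ∧ (r = r' ∨ (j = j₀ ∧ v r j = y))) →
    ((Finset.univ.filter (fun r => v r j₀ = y)).card ≤ s) →
    Irreducible (affD s v) := by
  intro s
  induction s with
  | zero =>
    intro v j₀ y H Hcard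
    have hnoy : ∀ r, v r j₀ ≠ y := by
      intro r hr
      have : r ∈ Finset.univ.filter (fun r => v r j₀ = y) := by
        simp [hr]
      have := Finset.card_pos.mpr ⟨r, this⟩
      omega
    have hj₀ : j₀ = 0 := Fin.fin_one_eq_zero j₀
    have hne : v 0 0 ≠ v 1 0 := by
      intro h
      rcases (H 0 0 1 0 h).2 with h2 | ⟨-, h3⟩
      · exact absurd h2 (by decide)
      · exact hnoy 0 (hj₀ ▸ h3)
    have hD : affD 0 v = X (v 0 0) - X (v 1 0) := by
      rw [affD, Matrix.det_fin_two]
      have e00 : affM 0 v 0 0 = X (v 0 0) := affM_castSucc v 0 0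
      have e10 : affM 0 v 1 0 = X (v 1 0) := affM_castSucc v 1 0
      have e01 : affM 0 v 0 1 = 1 := affM_last v 0
      have e11 : affM 0 v 1 1 = 1 := affM_last v 1
      rw [e00, e10, e01, e11]
      ring
    rw [hD, show (X (v 0 0) - X (v 1 0) : MvPolynomial σ ℂ)
      = 1 * X (v 0 0) + (- X (v 1 0)) by ring]
    apply irreducible_linear
    · simp
    · rw [vars_neg, vars_X]
      simp [hne]
    · exact one_ne_zero
    · exact fun q hq _ => isUnit_of_dvd_one hq
  | succ s IH =>
    intro v j₀ y H Hcard
    have Hcol : ∀ r j r' j', v r j = v r' j' → j = j' :=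
      fun r j r' j' h => (H r j r' j' h).1
    have Hy : ∀ r r' j, v r j = v r' j → r ≠ r' → j = j₀ ∧ v r j = y :=
      fun r r' j h hne => ((H r j r' j h).2.resolve_left hne)
    have Huniqval : ∀ rr : Fin (s + 3), v rr j₀ ≠ y →
        ∀ r2, v r2 j₀ = v rr j₀ → r2 = rr := by
      intro rr hrr r2 h
      by_contra hne
      have := (Hy r2 rr j₀ h hne).2
      rw [h] at this
      exact hrr this
    obtain ⟨c, hc⟩ : ∃ c : Fin (s + 2), c ≠ j₀ := exists_ne j₀
    obtain ⟨j₀', hj₀'⟩ : ∃ z : Fin (s + 1), c.succAbove z = j₀ :=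
      Fin.exists_succAbove_eq hc.symm
    set Sv := Finset.univ.filter (fun r : Fin (s + 3) => v r j₀ = y) with hSvdef
    clear_value Sv
    obtain ⟨rs, hrs⟩ : ∃ rs : Fin (s + 3), Sv.Nonempty → rs ∈ Sv := by
      by_cases h : Sv.Nonempty
      · exact ⟨h.choose, fun _ => h.choose_spec⟩
      · exact ⟨0, fun hh => absurd hh h⟩
    set mi : Fin (s + 3) → Fin (s + 2) → Fin (s + 1) → σ :=
      fun r a b => v (r.succAbove a) (c.succAbove b) with hmidef
    -- minors satisfy the hypotheses
    have Hmin : ∀ r : Fin (s + 3), ∀ a b a' b', mi r a b = mi r a' b' →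
        b = b' ∧ (a = a' ∨ (b = j₀' ∧ mi r a b = y)) := by
      intro r a b a' b' h
      obtain ⟨h1, h2⟩ := H _ _ _ _ h
      have hb : b = b' := Fin.succAbove_right_injective h1
      refine ⟨hb, ?_⟩
      rcases h2 with h2 | ⟨h2, h3⟩
      · exact Or.inl (Fin.succAbove_right_injective h2)
      · refine Or.inr ⟨?_, h3⟩
        apply Fin.succAbove_right_injective (p := c)
        rw [hj₀', h2]
    have hHcol' : ∀ r, ∀ a b a' b', mi r a b = mi r a' b' → b = b' :=
      fun r a b a' b' h => (Hmin r a b a' b' h).1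
    have hHinj' : ∀ r, ∀ b, b ≠ j₀' → ∀ a a', mi r a b = mi r a' b → a = a' := by
      intro r b hb a a' h
      rcases (Hmin r a b a' b h).2 with h2 | ⟨h2, -⟩
      · exact h2
      · exact absurd h2 hb
    have hmiuniq : ∀ r a, v (r.succAbove a) j₀ ≠ y →
        ∀ a', mi r a' j₀' = mi r a j₀' → a' = a := by
      intro r a ha a' h
      have h' : v (r.succAbove a') j₀ = v (r.succAbove a) j₀ := by
        rw [hmidef] at h
        simpa [hj₀'] using h
      exact Fin.succAbove_right_injective (Huniqval (r.succAbove a) ha _ h')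
    -- cardinality facts
    have HcardMin : ∀ r : Fin (s + 3),
        (Finset.univ.filter (fun a => mi r a j₀' = y)).card ≤ Sv.card := by
      intro r
      apply Finset.card_le_card_of_injOn (fun a => r.succAbove a)
      · intro a ha
        simp only [hmidef, hj₀', Finset.mem_coe, Finset.mem_filter, Finset.mem_univ, true_and] at ha
        rw [hSvdef, Finset.mem_coe, Finset.mem_filter]
        exact ⟨Finset.mem_univ _, ha⟩
      · exact fun a _ a' _ h => Fin.succAbove_right_injective h
    have hexa : ∀ r : Fin (s + 3), ∃ a, v (r.succAbove a) j₀ ≠ y := by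
      intro r
      by_contra hall
      push_neg at hall
      have hfull : (Finset.univ.filter (fun a => mi r a j₀' = y)) = Finset.univ := by
        apply Finset.filter_true_of_mem
        intro a _
        rw [hmidef]
        simp only [hj₀']
        exact hall a
      have h1 := HcardMin r
      rw [hfull] at h1
      simp only [Finset.card_univ, Fintype.card_fin] at h1
      omega
    -- nonzero / degree / vars facts for minors
    have hmi_ne : ∀ r a, v (r.succAbove a) j₀ ≠ y → affD s (mi r) ≠ 0 :=
      fun r a ha => affD_ne_zero (mi r) (hHcol' r) j₀' (hHinj' r) a (hmiuniq r a ha)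
    have hmi_vars : ∀ r a, v (r.succAbove a) j₀ ≠ y →
        mi r a j₀' ∈ (affD s (mi r)).vars :=
      fun r a ha => mem_vars_affD (mi r) (hHcol' r) j₀' (hHinj' r) a (hmiuniq r a ha)
    have hvars_mi : ∀ r (t : σ), t ∈ (affD s (mi r)).vars → ∃ a b, mi r a b = t := by
      intro r t ht
      obtain ⟨⟨a, b⟩, h⟩ := vars_affD_subset (mi r) ht
      exact ⟨a, b, h⟩
    have hx_notin_mi : ∀ r r', v r' c ∉ (affD s (mi r)).vars := by
      intro r r' hmem
      obtain ⟨a, b, hab⟩ := hvars_mi r _ hmem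
      have := Hcol _ _ _ _ hab
      exact Fin.succAbove_ne c b this
    -- the splitting
    have hsplit : affD (s + 1) v
        = ((-1 : MvPolynomial σ ℂ) ^ ((rs : ℕ) + ((Fin.castSucc c : Fin (s + 3)) : ℕ))
            * affD s (mi rs)) * X (v rs c)
          + ∑ r ∈ Finset.univ.erase rs,
              (-1 : MvPolynomial σ ℂ) ^ ((r : ℕ) + ((Fin.castSucc c : Fin (s + 3)) : ℕ))
                * X (v r c) * affD s (mi r) := by
      rw [affD_expand v c, ← Finset.sum_erase_add _ _ (Finset.mem_univ rs)]
      ring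
    rw [hsplit]
    have hexa_rs := hexa rs
    obtain ⟨ars, hars⟩ := hexa_rs
    apply irreducible_linear
    · rw [vars_sign_mul]
      exact hx_notin_mi rs rs
    · intro hmem
      have hsub := vars_sum_subset (Finset.univ.erase rs)
        (fun r => (-1 : MvPolynomial σ ℂ) ^ ((r : ℕ) + ((Fin.castSucc c : Fin (s + 3)) : ℕ))
          * X (v r c) * affD s (mi r))
      have := hsub hmem
      obtain ⟨r, hrmem, hrv⟩ := Finset.mem_biUnion.mp this
      have hrne : r ≠ rs := (Finset.mem_erase.mp hrmem).1
      rw [mul_assoc, vars_sign_mul] at hrv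
      have := vars_mul _ _ hrv
      rcases Finset.mem_union.mp this with h' | h'
      · rw [vars_X] at h'
        have heq : v rs c = v r c := by simpa using h'
        have := Hy rs r c heq (fun hh => hrne hh.symm)
        exact hc this.1
      · exact hx_notin_mi r rs h'
    · intro hzero
      rcases mul_eq_zero.mp hzero with h | h
      · exact pow_ne_zero _ (by simp) h
              -- (-1) ≠ 0
      · exact hmi_ne rs ars hars h
    · intro q hqA hqB
      have hMirr : Irreducible (affD s (mi rs)) := by
        apply IH (mi rs) j₀' y (fun a b a' b' h => Hmin rs a b a' b' h)
        -- sharpened cardinality bound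
        by_cases hne : Sv.Nonempty
        · have hrs' := hrs hne
          have hsub : (Finset.univ.filter (fun a => mi rs a j₀' = y)).card
              ≤ (Sv.erase rs).card := by
            apply Finset.card_le_card_of_injOn (fun a => rs.succAbove a)
            · intro a ha
              simp only [hmidef, hj₀', Finset.mem_coe, Finset.mem_filter, Finset.mem_univ, true_and] at ha
              rw [Finset.mem_coe, Finset.mem_erase]
              refine ⟨Fin.succAbove_ne rs a, ?_⟩
              rw [hSvdef, Finset.mem_filter]
              exact ⟨Finset.mem_univ _, ha⟩
            · exact fun a _ a' _ h => Fin.succAbove_right_injective h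
          rw [Finset.card_erase_of_mem hrs'] at hsub
          omega
        · have hSv0 : Sv = ∅ := Finset.not_nonempty_iff_eq_empty.mp hne
          have := HcardMin rs
          rw [hSv0, Finset.card_empty] at this
          omega
      have hqM : q ∣ affD s (mi rs) := dvd_of_dvd_sign_mul hqA
      obtain ⟨d, hd⟩ := hqM
      rcases hMirr.isUnit_or_isUnit hd with hu | hu
      · exact hu
      · exfalso
        have hMq : affD s (mi rs) ∣ q := by
          rw [hd]
          exact (hu.mul_right_dvd).mpr dvd_rfl
        have hMB : affD s (mi rs) ∣ _ := hMq.trans hqB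
        -- find rq ∉ Sv with rq ≠ rs
        obtain ⟨rq, hrqy, hrqrs⟩ : ∃ rq : Fin (s + 3), v rq j₀ ≠ y ∧ rq ≠ rs := by
          have hcard2 : 1 ≤ (Finset.univ \ (Sv ∪ {rs})).card + 0 := by
            have h1 : (Sv ∪ {rs}).card ≤ s + 2 := by
              have := Finset.card_union_le Sv {rs}
              simp only [Finset.card_singleton] at this
              omega
            have h2 := Finset.card_sdiff_of_subset (Finset.subset_univ (Sv ∪ {rs}))
            simp only [Finset.card_univ, Fintype.card_fin] at h2
            omega
          have : (Finset.univ \ (Sv ∪ {rs})).Nonempty := by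
            rw [← Finset.card_pos]
            omega
          obtain ⟨rq, hrq⟩ := this
          rw [Finset.mem_sdiff, Finset.mem_union, Finset.mem_singleton] at hrq
          push_neg at hrq
          refine ⟨rq, ?_, hrq.2.2⟩
          intro hy
          exact hrq.2.1 (by rw [hSvdef, Finset.mem_filter]; exact ⟨Finset.mem_univ _, hy⟩)
        -- second splitting inside B
        have hrqmem : rq ∈ Finset.univ.erase rs := by
          rw [Finset.mem_erase]
          exact ⟨hrqrs, Finset.mem_univ _⟩
        have hsplit2 : (∑ r ∈ Finset.univ.erase rs,
              (-1 : MvPolynomial σ ℂ) ^ ((r : ℕ) + ((Fin.castSucc c : Fin (s + 3)) : ℕ))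
                * X (v r c) * affD s (mi r))
            = ((-1 : MvPolynomial σ ℂ) ^ ((rq : ℕ) + ((Fin.castSucc c : Fin (s + 3)) : ℕ))
                * affD s (mi rq)) * X (v rq c)
              + ∑ r ∈ (Finset.univ.erase rs).erase rq,
                  (-1 : MvPolynomial σ ℂ) ^ ((r : ℕ) + ((Fin.castSucc c : Fin (s + 3)) : ℕ))
                    * X (v r c) * affD s (mi r) := by
          rw [← Finset.sum_erase_add _ _ hrqmem]
          ring
        rw [hsplit2] at hMB
        have hxq_notin_M : v rq c ∉ (affD s (mi rs)).vars := hx_notin_mi rs rq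
        have hxq_notin_A' : v rq c ∉
            ((-1 : MvPolynomial σ ℂ) ^ ((rq : ℕ) + ((Fin.castSucc c : Fin (s + 3)) : ℕ))
              * affD s (mi rq)).vars := by
          rw [vars_sign_mul]
          exact hx_notin_mi rq rq
        have hxq_notin_B2 : v rq c ∉
            (∑ r ∈ (Finset.univ.erase rs).erase rq,
              (-1 : MvPolynomial σ ℂ) ^ ((r : ℕ) + ((Fin.castSucc c : Fin (s + 3)) : ℕ))
                * X (v r c) * affD s (mi r)).vars := by
          intro hmem
          have hsub := vars_sum_subset ((Finset.univ.erase rs).erase rq)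
            (fun r => (-1 : MvPolynomial σ ℂ) ^ ((r : ℕ) + ((Fin.castSucc c : Fin (s + 3)) : ℕ))
              * X (v r c) * affD s (mi r))
          obtain ⟨r, hrmem, hrv⟩ := Finset.mem_biUnion.mp (hsub hmem)
          have hrne : r ≠ rq := (Finset.mem_erase.mp hrmem).1
          rw [mul_assoc, vars_sign_mul] at hrv
          rcases Finset.mem_union.mp (vars_mul _ _ hrv) with h' | h'
          · rw [vars_X] at h'
            have heq : v rq c = v r c := by simpa using h'
            exact hc (Hy rq r c heq (fun hh => hrne hh.symm)).1
          · exact hx_notin_mi r rq h'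
        obtain ⟨hdvdA', -⟩ := dvd_of_dvd_linear hxq_notin_M hxq_notin_A' hxq_notin_B2 hMB
        have hdvdM' : affD s (mi rs) ∣ affD s (mi rq) := dvd_of_dvd_sign_mul hdvdA'
        -- the distinguishing variable t = v rq j₀
        obtain ⟨a₁, ha₁⟩ : ∃ a₁, rs.succAbove a₁ = rq := Fin.exists_succAbove_eq hrqrs
        have ht_in : v rq j₀ ∈ (affD s (mi rs)).vars := by
          have h1 : v (rs.succAbove a₁) j₀ ≠ y := by rw [ha₁]; exact hrqy
          have := hmi_vars rs a₁ h1
          rw [hmidef] at this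
          simpa [hj₀', ha₁] using this
        have ht_notin : v rq j₀ ∉ (affD s (mi rq)).vars := by
          intro hmem
          obtain ⟨a, b, hab⟩ := hvars_mi rq _ hmem
          have hcol := Hcol _ _ _ _ hab
          have hbj : b = j₀' := by
            apply Fin.succAbove_right_injective (p := c)
            rw [hj₀', hcol]
          rw [hbj] at hab
          have hab' : v (rq.succAbove a) j₀ = v rq j₀ := by
            rw [hmidef] at hab
            simpa [hj₀'] using hab
          have := Hy _ _ _ hab' (Fin.succAbove_ne rq a)
          exact hrqy (hab'.symm.trans this.2)
        -- derive contradiction via Ee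
        obtain ⟨m₀, hm₀⟩ := exists_rep ht_notin
        have hEdvd : Ee (v rq j₀) (affD s (mi rs)) ∣ Polynomial.C m₀ := by
          have := map_dvd (Ee (v rq j₀)).toAlgHom hdvdM'
          change Ee (v rq j₀) _ ∣ Ee (v rq j₀) _ at this
          rwa [← hm₀, Ee_rename] at this
        have hm₀ne : Polynomial.C m₀ ≠ (0 : Polynomial (MvPolynomial _ ℂ)) := by
          rw [Polynomial.C_ne_zero]
          intro h0
          obtain ⟨a₂, ha₂⟩ := hexa rq
          apply hmi_ne rq a₂ ha₂
          rw [← hm₀, h0, map_zero]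
        have hd1 : (Ee (v rq j₀) (affD s (mi rs))).natDegree
            ≤ (Polynomial.C m₀).natDegree := Polynomial.natDegree_le_of_dvd hEdvd hm₀ne
        rw [Polynomial.natDegree_C] at hd1
        have hd0 : (Ee (v rq j₀) (affD s (mi rs))).natDegree = 0 := Nat.le_zero.mp hd1
        exact (not_mem_vars_of_natDegree_eq_zero hd0) ht_in


lemma mem_vars_X_sub {a b : σ} (hne : a ≠ b) :
    a ∈ ((X a - X b : MvPolynomial σ ℂ)).vars := by
  rw [MvPolynomial.mem_vars]
  refine ⟨Finsupp.single a 1, ?_, ?_⟩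
  · rw [MvPolynomial.mem_support_iff, MvPolynomial.coeff_sub, MvPolynomial.coeff_X]
    rw [MvPolynomial.coeff_X']
    rw [if_neg (show ¬ (Finsupp.single b 1 = Finsupp.single a (1 : ℕ)) by
      intro h
      exact hne ((Finsupp.single_left_inj one_ne_zero).mp h).symm)]
    simp
  · rw [Finsupp.mem_support_iff, Finsupp.single_apply, if_pos rfl]
    exact one_ne_zero

end ProofAux

/-- Let `m = K + 2 > 1`, let `i₀` be an index, `ii₀ = (i_1,...,i_m)` distinct indices
avoiding `i₀`, and `L` the subspace `z_{i_1,2} = ⋯ = z_{i_m,2}`.  For a multiindex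
`ii` of `m + 1` distinct indices avoiding `i₀`: the restriction `d_ii|_L` is
reducible iff `ii` contains all of `i_1,...,i_m`; in that case
`d_ii|_L = ± D_{ii;i,2}·(z_{i,2} − z_{i_1,2})` where `i` is the unique element of `ii`
not among the `i_t`; and `deg (d_ii|_L) = m` in any case. -/
theorem restriction_reducibility {n K : ℕ} (i0 : Fin n)
    (i₀ : Fin (K + 2) → Fin n) (h₀ : Function.Injective i₀) (h₀0 : ∀ t, i₀ t ≠ i0)
    (ii : Fin (K + 3) → Fin n) (hii : Function.Injective ii) (hii0 : ∀ r, ii r ≠ i0) :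
    (¬ Irreducible (restrictL i₀ (rowMatrix ii).det) ↔ ∀ t, ∃ r, ii r = i₀ t) ∧
    (∀ r₀ : Fin (K + 3), (∀ t, i₀ t ≠ ii r₀) → (∀ t, ∃ r, ii r = i₀ t) →
      (restrictL i₀ (rowMatrix ii).det
          = complMinor ii r₀ * (X (ii r₀, ⟨1, by omega⟩) - X (i₀ 0, ⟨1, by omega⟩)) ∨
        restrictL i₀ (rowMatrix ii).det
          = -(complMinor ii r₀ * (X (ii r₀, ⟨1, by omega⟩) - X (i₀ 0, ⟨1, by omega⟩))))) ∧
    (restrictL i₀ (rowMatrix ii).det).totalDegree = K + 2 := by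
  classical
  set j₀ : Fin (K + 2) := ⟨1, by omega⟩ with hj₀def
  set y : Fin n × Fin (K + 2) := (i₀ 0, j₀) with hydef
  set w : Fin (K + 3) → Fin (K + 2) → Fin n × Fin (K + 2) :=
    fun r j => if (∃ t, i₀ t = ii r) ∧ j = j₀ then (i₀ 0, j) else (ii r, j) with hwdef
  -- basic facts about w
  have hwsnd : ∀ r j, (w r j).2 = j := by
    intro r j
    rw [hwdef]
    dsimp only
    split <;> rfl
  have hP : ∀ r j, ¬((∃ t, i₀ t = ii r) ∧ j = j₀) → w r j = (ii r, j) := by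
    intro r j h
    rw [hwdef]
    dsimp only
    rw [if_neg h]
  have hPy : ∀ r, (∃ t, i₀ t = ii r) → w r j₀ = y := by
    intro r h
    rw [hwdef]
    dsimp only
    rw [if_pos ⟨h, rfl⟩]
  have hwy : ∀ r, w r j₀ = y ↔ ∃ t, i₀ t = ii r := by
    intro r
    constructor
    · intro h
      by_contra hne
      rw [hP r j₀ (fun hh => hne hh.1)] at h
      exact hne ⟨0, (congrArg Prod.fst h).symm⟩
    · exact hPy r
  have hH : ∀ r j r' j', w r j = w r' j' → j = j' ∧ (r = r' ∨ (j = j₀ ∧ w r j = y)) := by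
    intro r j r' j' h
    have hj : j = j' := by rw [← hwsnd r j, ← hwsnd r' j', h]
    subst hj
    refine ⟨rfl, ?_⟩
    by_cases h1 : (∃ t, i₀ t = ii r) ∧ j = j₀
    · refine Or.inr ⟨h1.2, ?_⟩
      rw [h1.2]
      exact hPy r h1.1
    · by_cases h2 : (∃ t, i₀ t = ii r') ∧ j = j₀
      · exfalso
        rw [hP r j h1] at h
        rw [hwdef] at h
        dsimp only at h
        rw [if_pos h2] at h
        exact h1 ⟨⟨0, (congrArg Prod.fst h).symm⟩, h2.2⟩
      · rw [hP r j h1, hP r' j h2] at h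
        exact Or.inl (hii (congrArg Prod.fst h))
  have hHcol : ∀ r j r' j', w r j = w r' j' → j = j' :=
    fun r j r' j' h => (hH r j r' j' h).1
  have hHinj : ∀ j, j ≠ j₀ → ∀ r r', w r j = w r' j → r = r' :=
    fun j hj r r' h => ((hH r j r' j h).2).resolve_right (fun hh => hj hh.1)
  -- glue : the restricted determinant is affD of w
  have hglue : restrictL i₀ (rowMatrix ii).det = ProofAux.affD (K + 1) w := by
    have h1 : restrictL i₀ (rowMatrix ii).det = ((rowMatrix ii).map (restrictL i₀)).det :=
      AlgHom.map_det _ _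
    rw [h1, ProofAux.affD]
    congr 1
    ext r c
    rw [Matrix.map_apply]
    refine Fin.lastCases ?_ (fun j => ?_) c
    · have e1 : rowMatrix ii r (Fin.last (K + 2)) = 1 := by
        simp [rowMatrix]
      have e2 : ProofAux.affM (K + 1) w r (Fin.last (K + 2)) = 1 := ProofAux.affM_last w r
      rw [e1, e2, map_one]
    · have e1 : rowMatrix ii r (Fin.castSucc j) = X (ii r, j) := by
        simp [rowMatrix]
      have e2 : ProofAux.affM (K + 1) w r (Fin.castSucc j) = X (w r j) :=
        ProofAux.affM_castSucc w r j
      rw [e1, e2, restrictL, rename_X]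
  -- choice function for covered indices
  set Fc : Fin (K + 2) → Fin (K + 3) :=
    fun t => if h : ∃ r, ii r = i₀ t then h.choose else 0 with hFcdef
  have hFc : ∀ t, (∃ r, ii r = i₀ t) → ii (Fc t) = i₀ t := by
    intro t h
    rw [hFcdef]
    dsimp only
    rw [dif_pos h]
    exact h.choose_spec
  have hFc_eq : ∀ t r, ii r = i₀ t → Fc t = r := by
    intro t r h
    exact hii ((hFc t ⟨r, h⟩).trans h.symm)
  -- the set of renamed rows is small
  have hSv_card : (Finset.univ.filter fun r : Fin (K + 3) => w r j₀ = y).card ≤ K + 2 := by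
    have hsub : (Finset.univ.filter fun r : Fin (K + 3) => w r j₀ = y)
        ⊆ Finset.univ.image Fc := by
      intro r hr
      rw [Finset.mem_filter] at hr
      obtain ⟨t, ht⟩ := (hwy r).mp hr.2
      exact Finset.mem_image.mpr ⟨t, Finset.mem_univ t, hFc_eq t r ht.symm⟩
    calc (Finset.univ.filter fun r : Fin (K + 3) => w r j₀ = y).card
        ≤ (Finset.univ.image Fc).card := Finset.card_le_card hsub
      _ ≤ (Finset.univ : Finset (Fin (K + 2))).card := Finset.card_image_le
      _ = K + 2 := by rw [Finset.card_univ, Fintype.card_fin]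
  -- an unrenamed row always exists
  obtain ⟨r₁, hr₁⟩ : ∃ r₁ : Fin (K + 3), w r₁ j₀ ≠ y := by
    by_contra hall
    push_neg at hall
    have hfull : (Finset.univ.filter fun r : Fin (K + 3) => w r j₀ = y) = Finset.univ :=
      Finset.filter_true_of_mem fun r _ => hall r
    rw [hfull, Finset.card_univ, Fintype.card_fin] at hSv_card
    omega
  have huniq_r₁ : ∀ r, w r j₀ = w r₁ j₀ → r = r₁ := by
    intro r h
    rcases (hH r j₀ r₁ j₀ h).2 with h2 | ⟨-, h3⟩
    · exact h2
    · exact absurd (h.symm.trans h3) hr₁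
  -- total degree
  have hdeg : (restrictL i₀ (rowMatrix ii).det).totalDegree = K + 2 := by
    rw [hglue]
    exact ProofAux.totalDegree_affD w hHcol j₀ hHinj r₁ huniq_r₁
  -- the complementary minor as an affD
  have hminor_eq : ∀ r₀ : Fin (K + 3), complMinor ii r₀
      = ProofAux.affD K (fun a b => (ii (r₀.succAbove a), j₀.succAbove b)) := by
    intro r₀
    have h1 : (Matrix.of fun r c : Fin (K + 2) =>
          rowMatrix ii (r₀.succAbove r) ((⟨1, by omega⟩ : Fin (K + 3)).succAbove c))
        = (ProofAux.affM (K + 1) (fun r j => (ii r, j))).submatrix r₀.succAbove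
            (Fin.castSucc j₀).succAbove := rfl
    rw [complMinor, h1, ProofAux.affM_submatrix]
    rfl
  -- facts about the generic minor: irreducible relevant data
  have hminor_var : ∀ r₀ : Fin (K + 3), (ii (r₀.succAbove 0), j₀.succAbove 0)
      ∈ (ProofAux.affD K (fun a b => (ii (r₀.succAbove a), j₀.succAbove b))).vars := by
    intro r₀
    apply ProofAux.mem_vars_affD _ ?hcol (0 : Fin (K + 1)) ?hinj (0 : Fin (K + 2)) ?huniq
    case hcol =>
      intro a b a' b' h
      exact Fin.succAbove_right_injective (congrArg Prod.snd h)
    case hinj =>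
      intro b _ a a' h
      exact Fin.succAbove_right_injective (hii (congrArg Prod.fst h))
    case huniq =>
      intro a h
      exact Fin.succAbove_right_injective (hii (congrArg Prod.fst h))
  -- the factorization statement
  have hfact : ∀ r₀ : Fin (K + 3), (∀ t, i₀ t ≠ ii r₀) → (∀ t, ∃ r, ii r = i₀ t) →
      (restrictL i₀ (rowMatrix ii).det
          = complMinor ii r₀ * (X (ii r₀, j₀) - X (i₀ 0, j₀)) ∨
        restrictL i₀ (rowMatrix ii).det
          = -(complMinor ii r₀ * (X (ii r₀, j₀) - X (i₀ 0, j₀)))) := by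
    intro r₀ h1 hcov
    have hFinj : Set.InjOn Fc (Finset.univ : Finset (Fin (K + 2))) := by
      intro t _ t' _ h
      apply h₀
      rw [← hFc t (hcov t), ← hFc t' (hcov t'), h]
    have himg : Finset.univ.image Fc = Finset.univ.erase r₀ := by
      apply Finset.eq_of_subset_of_card_le
      · intro a ha
        obtain ⟨t, -, hFt⟩ := Finset.mem_image.mp ha
        rw [Finset.mem_erase]
        refine ⟨?_, Finset.mem_univ _⟩
        rintro rfl
        exact h1 t (hFt ▸ hFc t (hcov t)).symm
      · simp only [Finset.card_erase_of_mem (Finset.mem_univ r₀), Finset.card_univ,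
          Fintype.card_fin, Finset.card_image_of_injOn hFinj]
        omega
    have hall : ∀ r, r ≠ r₀ → ∃ t, i₀ t = ii r := by
      intro r hr
      have : r ∈ Finset.univ.image Fc := by
        rw [himg, Finset.mem_erase]
        exact ⟨hr, Finset.mem_univ _⟩
      obtain ⟨t, -, hFt⟩ := Finset.mem_image.mp this
      exact ⟨t, (hFt ▸ hFc t (hcov t)).symm⟩
    have hmi : ∀ (r : Fin (K + 3)) a b,
        w (r.succAbove a) (j₀.succAbove b) = (ii (r.succAbove a), j₀.succAbove b) := by
      intro r a b
      apply hP
      rintro ⟨-, hj⟩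
      exact Fin.succAbove_ne j₀ b hj
    have hmieq : ∀ r : Fin (K + 3),
        (fun a b => w (r.succAbove a) (j₀.succAbove b))
          = (fun a b => (ii (r.succAbove a), j₀.succAbove b)) :=
      fun r => funext fun a => funext fun b => hmi r a b
    set g : Fin (K + 3) → MvPolynomial (Fin n × Fin (K + 2)) ℂ :=
      fun r => (-1) ^ ((r : ℕ) + ((Fin.castSucc j₀ : Fin (K + 3)) : ℕ))
        * ProofAux.affD K (fun a b => (ii (r.succAbove a), j₀.succAbove b)) with hgdef
    have hexp : ProofAux.affD (K + 1) w = ∑ r : Fin (K + 3), g r * X (w r j₀) := by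
      rw [ProofAux.affD_expand w j₀]
      refine Finset.sum_congr rfl fun r _ => ?_
      rw [hgdef]
      dsimp only
      rw [← hmieq r]
      ring
    have hzero : ∑ r : Fin (K + 3), g r = 0 := by
      have := ProofAux.sum_minor_zero w j₀
      rw [← this]
      refine Finset.sum_congr rfl fun r _ => ?_
      rw [hgdef]
      dsimp only
      rw [← hmieq r]
    rw [← Finset.sum_erase_add _ _ (Finset.mem_univ r₀)] at hexp hzero
    have hXy : ∑ r ∈ Finset.univ.erase r₀, g r * X (w r j₀)
        = (∑ r ∈ Finset.univ.erase r₀, g r) * X y := by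
      rw [Finset.sum_mul]
      refine Finset.sum_congr rfl fun r hr => ?_
      rw [hPy r (hall r (Finset.mem_erase.mp hr).1)]
    have hse : ∑ r ∈ Finset.univ.erase r₀, g r = - g r₀ :=
      eq_neg_of_add_eq_zero_left hzero
    have hwr₀ : w r₀ j₀ = (ii r₀, j₀) := by
      apply hP
      rintro ⟨⟨t, ht⟩, -⟩
      exact h1 t ht
    rw [hXy, hse, hwr₀] at hexp
    have hfinal : restrictL i₀ (rowMatrix ii).det = g r₀ * (X (ii r₀, j₀) - X y) := by
      rw [hglue, hexp]
      ring
    rw [hminor_eq r₀]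
    rcases neg_one_pow_eq_or (MvPolynomial (Fin n × Fin (K + 2)) ℂ)
        ((r₀ : ℕ) + ((Fin.castSucc j₀ : Fin (K + 3)) : ℕ)) with hsg | hsg
    · left
      rw [hfinal, hgdef]
      dsimp only
      rw [hsg, one_mul, hydef]
    · right
      rw [hfinal, hgdef]
      dsimp only
      rw [hsg, hydef]
      ring
  refine ⟨⟨?_, ?_⟩, hfact, hdeg⟩
  · -- ¬ Irreducible → covered
    intro hni
    by_contra hncov
    push_neg at hncov
    obtain ⟨t₀, ht₀⟩ := hncov
    apply hni
    rw [hglue]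
    apply ProofAux.affD_irreducible (K + 1) w j₀ y hH
    have hsub : (Finset.univ.filter fun r : Fin (K + 3) => w r j₀ = y)
        ⊆ (Finset.univ.erase t₀).image Fc := by
      intro r hr
      rw [Finset.mem_filter] at hr
      obtain ⟨t, ht⟩ := (hwy r).mp hr.2
      have htne : t ≠ t₀ := by
        rintro rfl
        exact ht₀ r ht.symm
      exact Finset.mem_image.mpr
        ⟨t, Finset.mem_erase.mpr ⟨htne, Finset.mem_univ t⟩, hFc_eq t r ht.symm⟩
    calc (Finset.univ.filter fun r : Fin (K + 3) => w r j₀ = y).card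
        ≤ ((Finset.univ.erase t₀).image Fc).card := Finset.card_le_card hsub
      _ ≤ (Finset.univ.erase t₀).card := Finset.card_image_le
      _ = K + 1 := by
          rw [Finset.card_erase_of_mem (Finset.mem_univ t₀), Finset.card_univ,
            Fintype.card_fin]
          omega
  · -- covered → ¬ Irreducible
    intro hcov
    obtain ⟨r₀, hr₀⟩ : ∃ r₀ : Fin (K + 3), ∀ t, i₀ t ≠ ii r₀ := by
      have hcard : (Finset.univ.image Fc).card ≤ K + 2 := by
        calc (Finset.univ.image Fc).card
            ≤ (Finset.univ : Finset (Fin (K + 2))).card := Finset.card_image_le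
          _ = K + 2 := by rw [Finset.card_univ, Fintype.card_fin]
      have hne : (Finset.univ \ Finset.univ.image Fc).Nonempty := by
        rw [← Finset.card_pos]
        have h2 := Finset.card_sdiff_of_subset
          (Finset.subset_univ (Finset.univ.image Fc : Finset (Fin (K + 3))))
        rw [Finset.card_univ, Fintype.card_fin] at h2
        omega
      obtain ⟨r₀, hr₀⟩ := hne
      rw [Finset.mem_sdiff] at hr₀
      refine ⟨r₀, fun t ht => ?_⟩
      exact hr₀.2 (Finset.mem_image.mpr ⟨t, Finset.mem_univ t, hFc_eq t r₀ ht.symm⟩)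
    have hXvars : (ii r₀, j₀) ∈ ((X (ii r₀, j₀) - X (i₀ 0, j₀) :
        MvPolynomial (Fin n × Fin (K + 2)) ℂ)).vars := by
      apply ProofAux.mem_vars_X_sub
      intro h
      exact hr₀ 0 (congrArg Prod.fst h).symm
    have hMnu : ¬ IsUnit (complMinor ii r₀) := by
      rw [hminor_eq r₀]
      exact ProofAux.not_isUnit_of_mem_vars (hminor_var r₀)
    have hXnu : ¬ IsUnit ((X (ii r₀, j₀) - X (i₀ 0, j₀) :
        MvPolynomial (Fin n × Fin (K + 2)) ℂ)) :=
      ProofAux.not_isUnit_of_mem_vars hXvars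
    rcases hfact r₀ hr₀ hcov with hf | hf <;> intro hirr <;> rw [hf] at hirr
    · rcases hirr.isUnit_or_isUnit rfl with hu | hu
      · exact hMnu hu
      · exact hXnu hu
    · have hrw : -(complMinor ii r₀ * (X (ii r₀, j₀) - X (i₀ 0, j₀)))
          = (- complMinor ii r₀) * (X (ii r₀, j₀) - X (i₀ 0, j₀)) := by ring
      rcases hirr.isUnit_or_isUnit hrw with hu | hu
      · exact hMnu (IsUnit.neg_iff _ |>.mp hu)
      · exact hXnu hu
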